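/- arXiv:1912.10782 — 3 statements merged into one kernel-verified Lean document; each statement's English description precedes it below -/
import Mathlib

section
/- Augmentations of the border DGA are Morse complexes: the assignment Ξ sending an augmentation ε of A_n(μ) to the K-linear map d(ε) : C → C defined on basis vectors by d(ε)(e_a) = Σ_{b>a} (−1)^{μ(a)} ε(k_{ab}) e_b is well defined (i.e., d(ε) is homogeneous of degree +1, preserves the filtration F^•, and satisfies d(ε) ∘ d(ε) = 0) and is a bijection from the set Aug(A_n(μ);K) of augmentations of A_n(μ) onto the set MC(C;K) of Morse complexes. -/
/-!
Setup: `K` a field, `n ≥ 1`, `μ : Fin n → ℤ` a Maslov potential.  `C = ⊕ₐ K·eₐ` is the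
graded vector space with `deg eₐ = -μ a` and decreasing filtration `Fⁱ C = span {eₐ : i ≤ a}`
(indices shifted to be `0`-based).  Linear maps `C → C` are encoded as matrices, where
`d b a` is the coefficient of `e b` in `d (e a)`.
-/

namespace AugSheaf

variable {K : Type*} [Field K] {n : ℕ}

/-- `d` is a Morse complex differential: homogeneous of degree `+1` (with respect to
`deg eₐ = -μ a`), filtration preserving, and `d ∘ d = 0`. -/
def IsMorse (μ : Fin n → ℤ) (d : Matrix (Fin n) (Fin n) K) : Prop :=
  (∀ b a : Fin n, d b a ≠ 0 → μ b = μ a - 1) ∧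
  (∀ b a : Fin n, d b a ≠ 0 → a ≤ b) ∧
  d * d = 0

/-- An augmentation of the border DGA `A_n(μ)`, encoded by its values `ε a b = ε (k_{ab})`
on the generators (`a < b`): it vanishes outside `a < b`, is supported in degree `0`
(i.e. `ε a b ≠ 0` forces `μ a = μ b + 1`), and satisfies `ε ∘ ∂ = 0` on the generators. -/
def IsBorderAug (μ : Fin n → ℤ) (ε : Fin n → Fin n → K) : Prop :=
  (∀ a b : Fin n, ¬ a < b → ε a b = 0) ∧
  (∀ a b : Fin n, ε a b ≠ 0 → μ a = μ b + 1) ∧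
  (∀ a b : Fin n, a < b →
    ∑ c ∈ Finset.Ioo a b, (-1 : K) ^ (μ a - μ c) * ε a c * ε c b = 0)

/-- The linear map `d(ε) : C → C`, `d(ε) eₐ = ∑_{b>a} (-1)^(μ a) ε (k_{ab}) e_b`,
associated to an augmentation `ε`. -/
def augDiff (μ : Fin n → ℤ) (ε : Fin n → Fin n → K) : Matrix (Fin n) (Fin n) K :=
  fun b a => if a < b then (-1 : K) ^ (μ a) * ε a b else 0

lemma neg_one_zpow_ne_zero (m : ℤ) : ((-1 : K) ^ m) ≠ 0 :=
  zpow_ne_zero m (by norm_num)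

lemma neg_one_zpow_mul_self (m : ℤ) : ((-1 : K) ^ m) * ((-1 : K) ^ m) = 1 := by
  rcases Int.even_or_odd m with h | h
  · rw [h.neg_one_zpow]; norm_num
  · rw [h.neg_one_zpow]; norm_num

lemma neg_one_zpow_sub (p q : ℤ) :
    ((-1 : K) ^ (p - q)) = (-1 : K) ^ p * (-1 : K) ^ q := by
  rw [zpow_sub₀ (by norm_num : (-1 : K) ≠ 0), div_eq_mul_inv,
    inv_eq_of_mul_eq_one_right (neg_one_zpow_mul_self q)]

/-- **Augmentations of the border DGA are Morse complexes**: `ε ↦ d(ε)` is well defined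
(every `d(ε)` is a Morse complex: homogeneous of degree `+1`, filtration preserving and
squaring to zero) and is a bijection from `Aug(A_n(μ);K)` onto `MC(C;K)`. -/
theorem aug_bijects_with_morse (hn : 1 ≤ n) (μ : Fin n → ℤ) :
    Set.BijOn (augDiff (K := K) μ) {ε | IsBorderAug μ ε} {d | IsMorse μ d} := by
  refine ⟨?_, ?_, ?_⟩
  · -- MapsTo
    rintro ε ⟨h0, h1, h2⟩
    refine ⟨?_, ?_, ?_⟩
    · intro b a h
      by_cases hab : a < b
      · simp only [augDiff, if_pos hab] at h
        have hε : ε a b ≠ 0 := fun h' => h (by rw [h', mul_zero])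
        have := h1 a b hε
        omega
      · simp [augDiff, hab] at h
    · intro b a h
      by_cases hab : a < b
      · exact hab.le
      · simp [augDiff, hab] at h
    · funext b a
      rw [Matrix.mul_apply]
      show _ = (0 : Matrix (Fin n) (Fin n) K) b a
      rw [Matrix.zero_apply]
      have hsub : ∑ c, augDiff μ ε b c * augDiff μ ε c a
          = ∑ c ∈ Finset.Ioo a b, augDiff μ ε b c * augDiff μ ε c a := by
        symm
        apply Finset.sum_subset (Finset.subset_univ _)
        intro c _ hc
        rw [Finset.mem_Ioo] at hc
        by_cases hac : a < c
        · have hcb : ¬ c < b := fun h => hc ⟨hac, h⟩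
          simp [augDiff, hcb]
        · simp [augDiff, hac]
      rw [hsub]
      by_cases hab : a < b
      · calc ∑ c ∈ Finset.Ioo a b, augDiff μ ε b c * augDiff μ ε c a
            = ∑ c ∈ Finset.Ioo a b, (-1 : K) ^ (μ a - μ c) * ε a c * ε c b := by
              apply Finset.sum_congr rfl
              intro c hc
              rw [Finset.mem_Ioo] at hc
              simp only [augDiff, if_pos hc.1, if_pos hc.2]
              rw [neg_one_zpow_sub]
              ring
          _ = 0 := h2 a b hab
      · rw [Finset.Ioo_eq_empty hab, Finset.sum_empty]
  · -- InjOn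
    rintro ε1 ⟨h10, _, _⟩ ε2 ⟨h20, _, _⟩ h
    funext a b
    by_cases hab : a < b
    · have := congrFun (congrFun h b) a
      simp only [augDiff, if_pos hab] at this
      exact mul_left_cancel₀ (neg_one_zpow_ne_zero (μ a)) this
    · rw [h10 a b hab, h20 a b hab]
  · -- SurjOn
    rintro d ⟨hdeg, hfil, hsq⟩
    have hdiag : ∀ a, d a a = 0 := by
      intro a
      by_contra h
      have := hdeg a a h
      omega
    set ε : Fin n → Fin n → K :=
      fun a b => if a < b then (-1 : K) ^ (μ a) * d b a else 0 with hε
    have hmem : IsBorderAug μ ε := by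
      refine ⟨?_, ?_, ?_⟩
      · intro a b hab; simp [hε, hab]
      · intro a b hab
        by_cases h : a < b
        · simp only [hε, if_pos h] at hab
          have hd : d b a ≠ 0 := fun h' => hab (by rw [h', mul_zero])
          have := hdeg b a hd
          omega
        · simp [hε, h] at hab
      · intro a b hab
        have key : ∀ p q x y : K, p * p = 1 → q * q = 1 →
            (p * q) * (p * x) * (q * y) = x * y := by
          intro p q x y hp hq
          calc (p * q) * (p * x) * (q * y) = (p * p) * (q * q) * (x * y) := by ring
            _ = x * y := by rw [hp, hq, one_mul, one_mul]
        have h1 : ∑ c ∈ Finset.Ioo a b, (-1 : K) ^ (μ a - μ c) * ε a c * ε c b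
            = ∑ c ∈ Finset.Ioo a b, d b c * d c a := by
          apply Finset.sum_congr rfl
          intro c hc
          rw [Finset.mem_Ioo] at hc
          simp only [hε, if_pos hc.1, if_pos hc.2]
          rw [neg_one_zpow_sub]
          calc ((-1:K)^(μ a) * (-1:K)^(μ c)) * ((-1:K)^(μ a) * d c a) *
                ((-1:K)^(μ c) * d b c)
              = d c a * d b c :=
                key _ _ _ _ (neg_one_zpow_mul_self (μ a)) (neg_one_zpow_mul_self (μ c))
            _ = d b c * d c a := mul_comm _ _
        rw [h1]
        have h2 : ∑ c ∈ Finset.Ioo a b, d b c * d c a = ∑ c, d b c * d c a := by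
          apply Finset.sum_subset (Finset.subset_univ _)
          intro c _ hc
          rw [Finset.mem_Ioo] at hc
          by_cases hac : a < c
          · have hcb : ¬ c < b := fun h => hc ⟨hac, h⟩
            rcases eq_or_lt_of_le (not_lt.mp hcb) with h' | h'
            · rw [h', hdiag, zero_mul]
            · have : d b c = 0 := by
                by_contra h0
                exact absurd (hfil b c h0) (not_le.mpr h')
              rw [this, zero_mul]
          · rcases eq_or_lt_of_le (not_lt.mp hac) with h' | h'
            · rw [← h', hdiag, mul_zero]
            · have : d c a = 0 := by
                by_contra h0
                exact absurd (hfil c a h0) (not_le.mpr h')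
              rw [this, mul_zero]
        rw [h2, ← Matrix.mul_apply, hsq, Matrix.zero_apply]
    refine ⟨ε, hmem, ?_⟩
    funext b a
    by_cases hab : a < b
    · simp only [augDiff, hε, if_pos hab]
      rw [← mul_assoc, neg_one_zpow_mul_self, one_mul]
    · simp only [augDiff, if_neg hab]
      rcases eq_or_lt_of_le (not_lt.mp hab) with h' | h'
      · rw [h', hdiag]
      · symm
        by_contra h0
        exact absurd (hfil b a h0) (not_le.mpr h')

end AugSheaf
end

section
/- The augmentation category of the border DGA A_n(μ) is a DG category: for any augmentations ε_1, ε_2, ε_3, ε_4 of A_n(μ), the explicitly defined operations m_1 and m_2 satisfy (i) m_1 ∘ m_1 = 0 on hom₊(ε_1,ε_2); (ii) the graded Leibniz rule m_1(m_2(β ⊗ α)) = m_2(m_1(β) ⊗ α) + (−1)^{|β|} m_2(β ⊗ m_1(α)) for all homogeneous β ∈ hom₊(ε_2,ε_3) and α ∈ hom₊(ε_1,ε_2); and (iii) strict associativity m_2(γ ⊗ m_2(β ⊗ α)) = m_2(m_2(γ ⊗ β) ⊗ α) for all γ ∈ hom₊(ε_3,ε_4), β ∈ hom₊(ε_2,ε_3),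 α ∈ hom₊(ε_1,ε_2). -/
/-!
Setup: `K` a field, `n ≥ 1`, `μ : Fin n → ℤ` a Maslov potential.  `C = ⊕ₐ K·eₐ` is the
graded vector space with `deg eₐ = -μ a` and decreasing filtration `Fⁱ C = span {eₐ : i ≤ a}`
(indices shifted to be `0`-based).  Linear maps `C → C` are encoded as matrices, where
`d b a` is the coefficient of `e b` in `d (e a)`.
-/

namespace AugSheaf

variable {K : Type*} [Field K] {n : ℕ}

/-- The hom space `hom₊(ε₁,ε₂) = ⊕_{a ≤ b} K·k_{ab}^∨` (with `k_{aa} := y_a` and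
`|k_{ab}^∨| = μ a - μ b`) is encoded by its coefficient functions `x`, with
`x a b` the coefficient of `k_{ab}^∨`; elements are supported on pairs `a ≤ b`.
`m1` is the differential of the augmentation category, determined on generators by
`m₁ k_{ab}^∨ = -∑_{c<a} ε₁ c a • k_{cb}^∨ + (-1)^(μ a - μ b) ∑_{b<d} ε₂ b d • k_{ad}^∨`. -/
def m1 (μ : Fin n → ℤ) (ε₁ ε₂ x : Fin n → Fin n → K) : Fin n → Fin n → K :=
  fun p q =>
    -(∑ a ∈ Finset.Ioi p, ε₁ p a * x a q) +
      ∑ b ∈ Finset.Iio q, (-1 : K) ^ (μ p - μ b) * ε₂ b q * x p b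

/-- The composition `m₂ : hom₊(ε₂,ε₃) ⊗ hom₊(ε₁,ε₂) → hom₊(ε₁,ε₃)`, determined on
generators by `m₂ (k_{cd}^∨ ⊗ k_{ab}^∨) = δ_{bc} (-1)^(|k_{ab}^∨||k_{cd}^∨| + 1) k_{ad}^∨`. -/
def m2 (μ : Fin n → ℤ) (y x : Fin n → Fin n → K) : Fin n → Fin n → K :=
  fun p q => ∑ c : Fin n, (-1 : K) ^ ((μ p - μ c) * (μ c - μ q) + 1) * y c q * x p c

lemma zadd (a b : ℤ) : (-1:K)^(a+b) = (-1:K)^a * (-1:K)^b :=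
  zpow_add₀ (by norm_num) a b

lemma zshift (a t : ℤ) : (-1:K)^(a + 2*t) = (-1:K)^a := by
  rw [zpow_add₀ (by norm_num : (-1:K) ≠ 0), zpow_mul]
  norm_num

lemma zcongr {a b : ℤ} (t : ℤ) (h : a = b + 2*t) : (-1:K)^a = (-1:K)^b := by
  rw [h, zshift]

lemma zsq (e : ℤ) : (-1:K)^e * (-1:K)^e = 1 := by
  rw [← zadd]
  have h : e + e = 0 + 2*e := by ring
  rw [h, zshift]
  norm_num

lemma zsub_one (e : ℤ) : (-1:K)^(e - 1) = -(-1:K)^e := by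
  rw [zpow_sub₀ (by norm_num : (-1:K) ≠ 0)]
  field_simp

lemma aug_sq {μ : Fin n → ℤ} {ε : Fin n → Fin n → K} (h : IsBorderAug μ ε) (a b : Fin n) :
    ∑ c : Fin n, ε a c * ε c b = 0 := by
  obtain ⟨h0, hdeg, hrel⟩ := h
  by_cases hab : a < b
  · have h1 := hrel a b hab
    have h2 : ∑ c ∈ Finset.Ioo a b, (-1 : K) ^ (μ a - μ c) * ε a c * ε c b
        = ∑ c : Fin n, (-1 : K) ^ (μ a - μ c) * ε a c * ε c b := by
      refine Finset.sum_subset (Finset.subset_univ _) fun c _ hc => ?_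
      have hc' : ¬ (a < c ∧ c < b) := by simpa [Finset.mem_Ioo] using hc
      rcases not_and_or.mp hc' with h | h
      · rw [h0 a c h, mul_zero, zero_mul]
      · rw [h0 c b h, mul_zero]
    have h3 : ∑ c : Fin n, ε a c * ε c b
        = -∑ c : Fin n, (-1 : K) ^ (μ a - μ c) * ε a c * ε c b := by
      rw [← Finset.sum_neg_distrib]
      refine Finset.sum_congr rfl fun c _ => ?_
      by_cases hz : ε a c = 0
      · simp [hz]
      · have hd := hdeg a c hz
        have : μ a - μ c = 1 := by omega
        rw [this]
        simp
    rw [h3, ← h2, h1, neg_zero]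
  · refine Finset.sum_eq_zero fun c _ => ?_
    by_cases hz : ε a c = 0
    · simp [hz]
    · by_cases hz2 : ε c b = 0
      · simp [hz2]
      · exfalso
        have hac : a < c := by by_contra hh; exact hz (h0 a c hh)
        have hcb : c < b := by by_contra hh; exact hz2 (h0 c b hh)
        exact hab (hac.trans hcb)

lemma m1_univ {μ : Fin n → ℤ} {ε₁ ε₂ : Fin n → Fin n → K}
    (h₁ : ∀ a b : Fin n, ¬ a < b → ε₁ a b = 0)
    (h₂ : ∀ a b : Fin n, ¬ a < b → ε₂ a b = 0)
    (x : Fin n → Fin n → K) (p q : Fin n) :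
    m1 μ ε₁ ε₂ x p q =
      -(∑ a : Fin n, ε₁ p a * x a q) +
        ∑ b : Fin n, (-1 : K) ^ (μ p - μ b) * ε₂ b q * x p b := by
  unfold m1
  congr 1
  · rw [neg_inj]
    refine Finset.sum_subset (Finset.subset_univ _) fun a _ ha => ?_
    rw [h₁ p a (by simpa using ha), zero_mul]
  · refine Finset.sum_subset (Finset.subset_univ _) fun b _ hb => ?_
    rw [h₂ b q (by simpa using hb), mul_zero, zero_mul]

lemma part1 {μ : Fin n → ℤ} {ε₁ ε₂ : Fin n → Fin n → K}
    (h₁ : IsBorderAug μ ε₁) (h₂ : IsBorderAug μ ε₂) (x : Fin n → Fin n → K) :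
    m1 μ ε₁ ε₂ (m1 μ ε₁ ε₂ x) = 0 := by
  funext p q
  simp only [m1_univ h₁.1 h₂.1]
  simp only [mul_add, mul_neg, neg_add, neg_neg, Finset.mul_sum,
    Finset.sum_add_distrib, Finset.sum_neg_distrib]
  simp only [Pi.zero_apply]
  have hA : ∑ a : Fin n, ∑ c : Fin n, ε₁ p a * (ε₁ a c * x c q) = 0 := by
    rw [Finset.sum_comm]
    refine Finset.sum_eq_zero fun c _ => ?_
    have : ∑ a : Fin n, ε₁ p a * (ε₁ a c * x c q)
        = (∑ a : Fin n, ε₁ p a * ε₁ a c) * x c q := by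
      rw [Finset.sum_mul]
      exact Finset.sum_congr rfl fun a _ => by ring
    rw [this, aug_sq h₁, zero_mul]
  have hBC : ∑ a : Fin n, ∑ b : Fin n, ε₁ p a * ((-1:K) ^ (μ a - μ b) * ε₂ b q * x a b)
      = -∑ b : Fin n, ∑ a : Fin n, (-1:K) ^ (μ p - μ b) * ε₂ b q * (ε₁ p a * x a b) := by
    rw [Finset.sum_comm, ← Finset.sum_neg_distrib]
    refine Finset.sum_congr rfl fun b _ => ?_
    rw [← Finset.sum_neg_distrib]
    refine Finset.sum_congr rfl fun a _ => ?_
    by_cases hz : ε₁ p a = 0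
    · simp [hz]
    · have hd := h₁.2.1 p a hz
      have he : μ a - μ b = (μ p - μ b) - 1 := by omega
      rw [he, zsub_one]
      ring
  have hD : ∑ b : Fin n, ∑ c : Fin n,
      (-1:K) ^ (μ p - μ b) * ε₂ b q * ((-1:K) ^ (μ p - μ c) * ε₂ c b * x p c) = 0 := by
    have step : ∀ b c : Fin n,
        (-1:K) ^ (μ p - μ b) * ε₂ b q * ((-1:K) ^ (μ p - μ c) * ε₂ c b * x p c)
        = -(ε₂ c b * (ε₂ b q * x p c)) := by
      intro b c
      by_cases hz : ε₂ c b = 0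
      · simp [hz]
      · have hd := h₂.2.1 c b hz
        have he : μ p - μ c = (μ p - μ b) - 1 := by omega
        rw [he, zsub_one]
        linear_combination (-(ε₂ b q * ε₂ c b * x p c)) * zsq (K := K) (μ p - μ b)
    simp only [step]
    rw [Finset.sum_comm]
    simp only [Finset.sum_neg_distrib, neg_eq_zero]
    refine Finset.sum_eq_zero fun c _ => ?_
    have : ∑ b : Fin n, ε₂ c b * (ε₂ b q * x p c)
        = (∑ b : Fin n, ε₂ c b * ε₂ b q) * x p c := by
      rw [Finset.sum_mul]
      exact Finset.sum_congr rfl fun b _ => by ring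
    rw [this, aug_sq h₂, zero_mul]
  linear_combination hA - hBC + hD

lemma part3 {μ : Fin n → ℤ} (z y x : Fin n → Fin n → K) :
    m2 μ z (m2 μ y x) = m2 μ (m2 μ z y) x := by
  funext p q
  unfold m2
  simp only [Finset.mul_sum, Finset.sum_mul]
  rw [Finset.sum_comm]
  refine Finset.sum_congr rfl fun d _ => Finset.sum_congr rfl fun c _ => ?_
  have hs : (-1:K) ^ ((μ p - μ c) * (μ c - μ q) + 1) * (-1:K) ^ ((μ p - μ d) * (μ d - μ c) + 1)
      = (-1:K) ^ ((μ p - μ d) * (μ d - μ q) + 1) * (-1:K) ^ ((μ d - μ c) * (μ c - μ q) + 1) := by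
    rw [← zadd, ← zadd]
    exact zcongr 0 (by ring)
  linear_combination (z c q * y d c * x p d) * hs

lemma part2 {μ : Fin n → ℤ} {ε₁ ε₂ ε₃ : Fin n → Fin n → K}
    (h₁ : IsBorderAug μ ε₁) (h₂ : IsBorderAug μ ε₂) (h₃ : IsBorderAug μ ε₃)
    (k : ℤ) (y x : Fin n → Fin n → K)
    (hy : ∀ a b : Fin n, y a b ≠ 0 → μ a - μ b = k) :
    m1 μ ε₁ ε₃ (m2 μ y x) =
      m2 μ (m1 μ ε₂ ε₃ y) x + ((-1 : K) ^ k) • m2 μ y (m1 μ ε₁ ε₂ x) := by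
  funext p q
  simp only [Pi.add_apply, Pi.smul_apply, smul_eq_mul]
  simp only [m1_univ h₁.1 h₃.1, m1_univ h₂.1 h₃.1, m1_univ h₁.1 h₂.1]
  simp only [m2]
  simp only [m1_univ h₂.1 h₃.1, m1_univ h₁.1 h₂.1]
  simp only [mul_add, add_mul, mul_neg, neg_mul, Finset.mul_sum, Finset.sum_mul,
    Finset.sum_add_distrib, Finset.sum_neg_distrib, neg_add, neg_neg]
  have hL1R3 : ∑ a : Fin n, ∑ c : Fin n,
        ε₁ p a * ((-1:K) ^ ((μ a - μ c) * (μ c - μ q) + 1) * y c q * x a c)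
      = ∑ c : Fin n, ∑ a : Fin n,
        (-1:K) ^ k * ((-1:K) ^ ((μ p - μ c) * (μ c - μ q) + 1) * y c q * (ε₁ p a * x a c)) := by
    rw [Finset.sum_comm]
    refine Finset.sum_congr rfl fun c _ => Finset.sum_congr rfl fun a _ => ?_
    by_cases hz : ε₁ p a = 0
    · simp [hz]
    by_cases hz' : y c q = 0
    · simp [hz']
    have hd : μ p = μ a + 1 := h₁.2.1 p a hz
    have hk : μ c - μ q = k := hy c q hz'
    have hd' : μ a = μ p - 1 := by omega
    have hs : (-1:K) ^ ((μ a - μ c) * (μ c - μ q) + 1)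
        = (-1:K) ^ k * (-1:K) ^ ((μ p - μ c) * (μ c - μ q) + 1) := by
      rw [← zadd]
      refine zcongr (-k) ?_
      rw [hd', ← hk]; ring
    linear_combination (y c q * ε₁ p a * x a c) * hs
  have hL2R2 : ∑ b : Fin n, ∑ c : Fin n,
        (-1:K) ^ (μ p - μ b) * ε₃ b q * ((-1:K) ^ ((μ p - μ c) * (μ c - μ b) + 1) * y c b * x p c)
      = ∑ c : Fin n, ∑ b : Fin n,
        (-1:K) ^ ((μ p - μ c) * (μ c - μ q) + 1) * ((-1:K) ^ (μ c - μ b) * ε₃ b q * y c b) * x p c := by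
    rw [Finset.sum_comm]
    refine Finset.sum_congr rfl fun c _ => Finset.sum_congr rfl fun b _ => ?_
    by_cases hz : ε₃ b q = 0
    · simp [hz]
    have hd : μ b = μ q + 1 := h₃.2.1 b q hz
    have hs : (-1:K) ^ (μ p - μ b) * (-1:K) ^ ((μ p - μ c) * (μ c - μ b) + 1)
        = (-1:K) ^ ((μ p - μ c) * (μ c - μ q) + 1) * (-1:K) ^ (μ c - μ b) := by
      rw [← zadd, ← zadd]
      refine zcongr 0 ?_
      rw [hd]; ring
    linear_combination (ε₃ b q * y c b * x p c) * hs
  have hR1R4 : ∑ c : Fin n, ∑ a : Fin n,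
        (-1:K) ^ ((μ p - μ c) * (μ c - μ q) + 1) * (ε₂ c a * y a q) * x p c
      = ∑ a : Fin n, ∑ c : Fin n,
        (-1:K) ^ k * ((-1:K) ^ ((μ p - μ a) * (μ a - μ q) + 1) * y a q * ((-1:K) ^ (μ p - μ c) * ε₂ c a * x p c)) := by
    rw [Finset.sum_comm (γ := Fin n)]
    refine Finset.sum_congr rfl fun a _ => Finset.sum_congr rfl fun c _ => ?_
    by_cases hz : ε₂ c a = 0
    · simp [hz]
    by_cases hz' : y a q = 0
    · simp [hz']
    have hc : μ c = μ a + 1 := h₂.2.1 c a hz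
    have hk : μ a - μ q = k := hy a q hz'
    have hs : (-1:K) ^ ((μ p - μ c) * (μ c - μ q) + 1)
        = (-1:K) ^ k * ((-1:K) ^ ((μ p - μ a) * (μ a - μ q) + 1) * (-1:K) ^ (μ p - μ c)) := by
      rw [← zadd, ← zadd]
      refine zcongr (-(μ a - μ q)) ?_
      rw [hc, ← hk]; ring
    linear_combination (ε₂ c a * y a q * x p c) * hs
  linear_combination (-1 : K) * hL1R3 + hL2R2 + hR1R4

/-- **The augmentation category of the border DGA `A_n(μ)` is a DG category**:
(i) `m₁ ∘ m₁ = 0`; (ii) the graded Leibniz rule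
`m₁ (m₂ (β ⊗ α)) = m₂ (m₁ β ⊗ α) + (-1)^{|β|} m₂ (β ⊗ m₁ α)` for homogeneous `β`;
(iii) strict associativity `m₂ (γ ⊗ m₂ (β ⊗ α)) = m₂ (m₂ (γ ⊗ β) ⊗ α)`. -/
theorem aug_category_is_dg (hn : 1 ≤ n) (μ : Fin n → ℤ)
    (ε₁ ε₂ ε₃ ε₄ : Fin n → Fin n → K)
    (h₁ : IsBorderAug μ ε₁) (h₂ : IsBorderAug μ ε₂)
    (h₃ : IsBorderAug μ ε₃) (h₄ : IsBorderAug μ ε₄) :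
    -- (i)  m₁ ∘ m₁ = 0 on hom₊(ε₁,ε₂)
    (∀ x : Fin n → Fin n → K, (∀ a b : Fin n, ¬ a ≤ b → x a b = 0) →
      m1 μ ε₁ ε₂ (m1 μ ε₁ ε₂ x) = 0) ∧
    -- (ii) graded Leibniz rule, for homogeneous β of degree k
    (∀ (k : ℤ) (y x : Fin n → Fin n → K),
      (∀ a b : Fin n, ¬ a ≤ b → y a b = 0) → (∀ a b : Fin n, ¬ a ≤ b → x a b = 0) →
      (∀ a b : Fin n, y a b ≠ 0 → μ a - μ b = k) →
      m1 μ ε₁ ε₃ (m2 μ y x) =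
        m2 μ (m1 μ ε₂ ε₃ y) x + ((-1 : K) ^ k) • m2 μ y (m1 μ ε₁ ε₂ x)) ∧
    -- (iii) strict associativity
    (∀ z y x : Fin n → Fin n → K,
      (∀ a b : Fin n, ¬ a ≤ b → z a b = 0) → (∀ a b : Fin n, ¬ a ≤ b → y a b = 0) →
      (∀ a b : Fin n, ¬ a ≤ b → x a b = 0) →
      m2 μ z (m2 μ y x) = m2 μ (m2 μ z y) x) :=
  ⟨fun x _ => part1 h₁ h₂ x,
   fun k y x _ _ hy => part2 h₁ h₂ h₃ k y x hy,
   fun z y x _ _ _ => part3 z y x⟩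


end AugSheaf
end

section
/- Claim 1 (explicit cone isomorphism at a vertex): the K-linear map α : Cone(−r_{R,1}) → (E, D) defined by α(b_{pq}^+) = (−1)^{s(p,q)} (e_q ⊗ e_p^*) for 1 ≤ p ≤ q ≤ r and α(c_{pq}^+[1]) = (−1)^{s(p,q)} (e_q ⊗ e_p^*) for 1 ≤ q < p ≤ r, where s(p,q) = μ(p)(μ(q)+1)+1, is an isomorphism of cochain complexes: it is a degree-preserving K-linear bijection satisfying α ∘ δ = D ∘ α (and both δ and D square to zero). -/
/-!
Setup for a vertex of type `(0,r)`: `K` a field, `r ≥ 1`, `μ : Fin r → ℤ` the Maslov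
potential on the right half-edges.  `C = ⊕ₚ K·eₚ` with `deg eₚ = -μ p`; linear maps
`C → C` are encoded as matrices with `f q p` the coefficient of `e q` in `f (e p)`.
Elements of the graded vector spaces `Hom_R = ⊕_{p ≤ q} K·b_{pq}⁺` and
`Hom_v[1] = ⊕_{q < p} K·c_{pq}⁺[1]` (both with `|·| = μ p - μ q`) are encoded by their
coefficient functions `β`, `γ`, supported on `p ≤ q` resp. `q < p`.
-/

namespace AugSheaf

variable {K : Type*} [Field K] {r : ℕ}

/-- The restriction to the non-wrapping vertex generators of an augmentation of the
internal DGA of the vertex: `x p q = εᵢ (v_{p,q-p})` for `p < q`, vanishing elsewhere,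
supported in degree `0`, and satisfying `∑_{p<c<q} x p c * x c q = 0`. -/
def IsVertexAug (μ : Fin r → ℤ) (x : Fin r → Fin r → K) : Prop :=
  (∀ p q : Fin r, ¬ p < q → x p q = 0) ∧
  (∀ p q : Fin r, x p q ≠ 0 → μ p = μ q + 1) ∧
  (∀ p q : Fin r, p < q → ∑ c ∈ Finset.Ioo p q, x p c * x c q = 0)

/-- The differential `dᵢ = ∑_{p<q} (-1)^(μ p) xᵢ p q (e_q ⊗ eₚ^*)`. -/
def vDiff (μ : Fin r → ℤ) (x : Fin r → Fin r → K) : Matrix (Fin r) (Fin r) K :=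
  fun q p => if p < q then (-1 : K) ^ (μ p) * x p q else 0

/-- The differential `m_{1,R}` on `Hom_R`, determined on generators (for `A ≤ B`) by
`m_{1,R} b_{AB}⁺ = -∑_{c<A} x₁ c A • b_{cB}⁺ + (-1)^(μ A - μ B) ∑_{B<d} x₂ B d • b_{Ad}⁺`. -/
def m1R (μ : Fin r → ℤ) (x₁ x₂ β : Fin r → Fin r → K) : Fin r → Fin r → K :=
  fun P Q =>
    -(∑ A ∈ Finset.Ioi P, x₁ P A * β A Q) +
      ∑ B ∈ Finset.Iio Q, (-1 : K) ^ (μ P - μ B) * x₂ B Q * β P B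

/-- The differential `m₁` on `Hom_v`, determined on generators (for `B < A`) by
`m₁ c_{AB}⁺ = ∑_{B<p<A} x₁ p A • c_{pB}⁺ + (-1)^(μ A - μ B + 1) ∑_{B<q<A} x₂ B q • c_{Aq}⁺`. -/
def m1V (μ : Fin r → ℤ) (x₁ x₂ γ : Fin r → Fin r → K) : Fin r → Fin r → K :=
  fun P Q =>
    if Q < P then
      (∑ A ∈ Finset.Ioi P, x₁ P A * γ A Q) +
        ∑ B ∈ Finset.Iio Q, (-1 : K) ^ (μ P - μ B + 1) * x₂ B Q * γ P B
    else 0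

/-- The map `r_{R,1} : Hom_v → Hom_R`, determined on generators (for `B < A`) by
`r_{R,1} c_{AB}⁺ = ∑_{p≤B} x₁ p A • b_{pB}⁺ + (-1)^(μ A - μ B + 1) ∑_{q≥A} x₂ B q • b_{Aq}⁺`. -/
def rR1 (μ : Fin r → ℤ) (x₁ x₂ γ : Fin r → Fin r → K) : Fin r → Fin r → K :=
  fun P Q =>
    if P ≤ Q then
      (∑ A ∈ Finset.Ioi Q, x₁ P A * γ A Q) +
        ∑ B ∈ Finset.Iio P, (-1 : K) ^ (μ P - μ B + 1) * x₂ B Q * γ P B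
    else 0

/-- The map `α : Cone(-r_{R,1}) → E = End(C)`, sending `b_{pq}⁺ ↦ (-1)^(s p q) (e_q ⊗ eₚ^*)`
(`p ≤ q`) and `c_{pq}⁺[1] ↦ (-1)^(s p q) (e_q ⊗ eₚ^*)` (`q < p`), where
`s p q = μ p (μ q + 1) + 1`.  A cone element is a pair `(β, γ)` of coefficient functions. -/
def alphaM (μ : Fin r → ℤ) (β γ : Fin r → Fin r → K) : Matrix (Fin r) (Fin r) K :=
  fun q p => (-1 : K) ^ (μ p * (μ q + 1) + 1) * (if p ≤ q then β p q else γ p q)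


open Finset

variable {μ : Fin r → ℤ}

lemma eps_add (m n : ℤ) : (-1:K)^(m+n) = (-1:K)^m * (-1:K)^n := zpow_add₀ (by norm_num) _ _

lemma eps_congr {a b : ℤ} (h : Even (a - b)) : (-1:K)^a = (-1:K)^b := by
  have ha : a = b + (a - b) := by ring
  rw [ha, eps_add, h.neg_one_zpow, mul_one]

lemma eps_ne_zero (n : ℤ) : ((-1:K)^n) ≠ 0 := zpow_ne_zero _ (by norm_num)

lemma sum_univ_of (s : Finset (Fin r)) (f : Fin r → K) (h : ∀ a, a ∉ s → f a = 0) :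
    ∑ a ∈ s, f a = ∑ a, f a := Finset.sum_subset (Finset.subset_univ s) (fun a _ ha => h a ha)

lemma aug_sum_univ {x : Fin r → Fin r → K} (hx : IsVertexAug μ x) (p q : Fin r) :
    ∑ c, x p c * x c q = 0 := by
  rw [← sum_univ_of (Finset.Ioo p q)]
  · by_cases hpq : p < q
    · exact hx.2.2 p q hpq
    · apply Finset.sum_eq_zero
      intro c hc
      rw [Finset.mem_Ioo] at hc
      exact absurd (hc.1.trans hc.2) hpq
  · intro c hc
    rw [Finset.mem_Ioo, not_and_or] at hc
    rcases hc with hc | hc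
    · rw [hx.1 p c hc, zero_mul]
    · rw [hx.1 c q hc, mul_zero]

lemma vDiff_apply {x : Fin r → Fin r → K} (hx : IsVertexAug μ x) (q p : Fin r) :
    vDiff μ x q p = (-1:K)^(μ p) * x p q := by
  unfold vDiff
  split
  · rfl
  · rw [hx.1 p q (by assumption), mul_zero]

lemma eps_mu_eq {x : Fin r → Fin r → K} (hx : IsVertexAug μ x) {p a : Fin r}
    (h : x p a ≠ 0) (c : ℤ) : (-1:K)^(μ p + c) = -(-1:K)^(μ a + c) := by
  rw [hx.2.1 p a h, show μ a + 1 + c = (μ a + c) + 1 by ring, eps_add, zpow_one]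
  ring

/-- `d ∘ d = 0`. -/
lemma vDiff_sq {x : Fin r → Fin r → K} (hx : IsVertexAug μ x) :
    vDiff μ x * vDiff μ x = 0 := by
  funext Q P
  rw [Matrix.mul_apply, Matrix.zero_apply]
  have : ∀ c, vDiff μ x Q c * vDiff μ x c P = -(x P c * x c Q) := by
    intro c
    rw [vDiff_apply hx, vDiff_apply hx]
    by_cases h : x P c = 0
    · rw [h]; ring
    · have := eps_mu_eq hx h 0
      simp only [add_zero] at this
      have h2 : ((-1:K)^(μ c))*((-1:K)^(μ c)) = 1 := by
        rw [← eps_add]; exact Even.neg_one_zpow ⟨μ c, rfl⟩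
      rw [this]; linear_combination (-(x c Q * x P c)) * h2
  rw [Finset.sum_congr rfl (fun c _ => this c)]
  simp [aug_sum_univ hx]

lemma Dsq {x₁ x₂ : Fin r → Fin r → K} (hx₁ : IsVertexAug μ x₁) (hx₂ : IsVertexAug μ x₂)
    (k : ℤ) (f : Matrix (Fin r) (Fin r) K) :
    vDiff μ x₂ * (vDiff μ x₂ * f - ((-1 : K) ^ k) • (f * vDiff μ x₁)) -
      ((-1 : K) ^ (k + 1)) •
        ((vDiff μ x₂ * f - ((-1 : K) ^ k) • (f * vDiff μ x₁)) * vDiff μ x₁) = 0 := by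
  have hk1 : (-1:K)^(k+1) = -((-1:K)^k) := by rw [eps_add, zpow_one]; ring
  have hss : ((-1:K)^k) * ((-1:K)^k) = 1 := by
    rw [← eps_add]; exact Even.neg_one_zpow ⟨k, rfl⟩
  have e1 : vDiff μ x₂ * (vDiff μ x₂ * f) = 0 := by
    rw [← Matrix.mul_assoc, vDiff_sq hx₂, Matrix.zero_mul]
  have e2 : (f * vDiff μ x₁) * vDiff μ x₁ = 0 := by
    rw [Matrix.mul_assoc, vDiff_sq hx₁, Matrix.mul_zero]
  have e3 : vDiff μ x₂ * (f * vDiff μ x₁) = (vDiff μ x₂ * f) * vDiff μ x₁ :=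
    (Matrix.mul_assoc _ _ _).symm
  rw [hk1]
  simp only [Matrix.mul_sub, Matrix.sub_mul, Matrix.mul_smul, Matrix.smul_mul, neg_smul,
    sub_neg_eq_add, e1, e2, e3, smul_zero, zero_sub, smul_smul, hss, one_smul]
  simp only [sub_zero]
  abel

lemma alpha_add (μ : Fin r → ℤ) (β β' γ γ' : Fin r → Fin r → K) :
    alphaM μ (β + β') (γ + γ') = alphaM μ β γ + alphaM μ β' γ' := by
  funext q p
  simp only [alphaM, Matrix.add_apply, Pi.add_apply]
  by_cases hpq : p ≤ q <;> simp [hpq, mul_add]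

lemma alpha_smul (μ : Fin r → ℤ) (c : K) (β γ : Fin r → Fin r → K) :
    alphaM μ (c • β) (c • γ) = c • alphaM μ β γ := by
  funext q p
  simp only [alphaM, Matrix.smul_apply, Pi.smul_apply, smul_eq_mul]
  by_cases hpq : p ≤ q <;> simp [hpq] <;> ring

lemma alpha_deg (μ : Fin r → ℤ) (k : ℤ) (β γ : Fin r → Fin r → K)
    (hβ : ∀ p q : Fin r, β p q ≠ 0 → μ p - μ q = k)
    (hγ : ∀ p q : Fin r, γ p q ≠ 0 → μ p - μ q = k)
    (q p : Fin r) (h : alphaM μ β γ q p ≠ 0) : μ p - μ q = k := by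
  unfold alphaM at h
  have h' : (if p ≤ q then β p q else γ p q) ≠ 0 := right_ne_zero_of_mul h
  by_cases hpq : p ≤ q
  · exact hβ p q (by simpa [hpq] using h')
  · exact hγ p q (by simpa [hpq] using h')

lemma alpha_bij (μ : Fin r → ℤ) :
    Function.Bijective
      (fun bc : {bc : (Fin r → Fin r → K) × (Fin r → Fin r → K) //
          (∀ p q : Fin r, ¬ p ≤ q → bc.1 p q = 0) ∧
          (∀ p q : Fin r, ¬ q < p → bc.2 p q = 0)} =>
        alphaM μ bc.1.1 bc.1.2) := by
  constructor
  · rintro ⟨⟨β, γ⟩, hβ, hγ⟩ ⟨⟨β', γ'⟩, hβ', hγ'⟩ h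
    simp only at h
    have key : ∀ p q : Fin r, (if p ≤ q then β p q else γ p q) =
        (if p ≤ q then β' p q else γ' p q) := by
      intro p q
      have := congrFun (congrFun h q) p
      exact mul_left_cancel₀ (eps_ne_zero _) this
    refine Subtype.ext (Prod.ext ?_ ?_)
    · funext p q
      by_cases hpq : p ≤ q
      · have := key p q; simpa [hpq] using this
      · rw [hβ p q hpq, hβ' p q hpq]
    · funext p q
      by_cases hpq : q < p
      · have := key p q; simpa [not_le.mpr hpq] using this
      · rw [hγ p q hpq, hγ' p q hpq]
  · intro M
    refine ⟨⟨⟨fun p q => if p ≤ q then (-1:K)^(μ p * (μ q + 1) + 1) * M q p else 0,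
             fun p q => if p ≤ q then 0 else (-1:K)^(μ p * (μ q + 1) + 1) * M q p⟩,
             ?_, ?_⟩, ?_⟩
    · intro p q h; simp [h]
    · intro p q h; simp [not_lt.mp h]
    · funext q p
      simp only [alphaM]
      have h2 : ((-1:K)^(μ p * (μ q + 1) + 1)) * ((-1:K)^(μ p * (μ q + 1) + 1)) = 1 := by
        rw [← eps_add]; exact Even.neg_one_zpow ⟨_, rfl⟩
      by_cases hpq : p ≤ q
      · simp only [if_pos hpq]; rw [← mul_assoc, h2, one_mul]
      · simp only [if_neg hpq]; rw [← mul_assoc, h2, one_mul]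

lemma chain {x₁ x₂ : Fin r → Fin r → K} (hx₁ : IsVertexAug μ x₁) (hx₂ : IsVertexAug μ x₂)
    (k : ℤ) (β γ : Fin r → Fin r → K)
    (hβs : ∀ p q : Fin r, ¬ p ≤ q → β p q = 0) (hγs : ∀ p q : Fin r, ¬ q < p → γ p q = 0)
    (hβd : ∀ p q : Fin r, β p q ≠ 0 → μ p - μ q = k)
    (hγd : ∀ p q : Fin r, γ p q ≠ 0 → μ p - μ q = k) :
    alphaM μ (m1R μ x₁ x₂ β - rR1 μ x₁ x₂ γ) (-(m1V μ x₁ x₂ γ)) =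
      vDiff μ x₂ * alphaM μ β γ - ((-1 : K) ^ k) • (alphaM μ β γ * vDiff μ x₁) := by
  funext Q P
  set v : Fin r → Fin r → K := fun p q => if p ≤ q then β p q else γ p q with hv
  have hvd : ∀ p q, v p q ≠ 0 → μ p - μ q = k := by
    intro p q h
    by_cases hpq : p ≤ q
    · exact hβd p q (by simpa [hv, hpq] using h)
    · exact hγd p q (by simpa [hv, hpq] using h)
  have step1 : (if P ≤ Q then (m1R μ x₁ x₂ β - rR1 μ x₁ x₂ γ) P Q
        else (-(m1V μ x₁ x₂ γ)) P Q)
      = -(∑ A, x₁ P A * v A Q) + ∑ B, (-1:K)^(μ P - μ B) * x₂ B Q * v P B := by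
    by_cases hPQ : P ≤ Q
    · rw [if_pos hPQ]
      simp only [Pi.sub_apply, m1R, rR1, if_pos hPQ]
      rw [sum_univ_of (Finset.Ioi P) (fun A => x₁ P A * β A Q)
            (fun A hA => by show x₁ P A * _ = 0; rw [hx₁.1 P A (by simpa using hA), zero_mul]),
          sum_univ_of (Finset.Ioi Q) (fun A => x₁ P A * γ A Q)
            (fun A hA => by show x₁ P A * γ A Q = 0; rw [hγs A Q (by simpa using hA), mul_zero]),
          sum_univ_of (Finset.Iio Q) (fun B => (-1:K)^(μ P - μ B) * x₂ B Q * β P B)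
            (fun B hB => by show _ * x₂ B Q * _ = 0; rw [hx₂.1 B Q (by simpa using hB), mul_zero, zero_mul]),
          sum_univ_of (Finset.Iio P) (fun B => (-1:K)^(μ P - μ B + 1) * x₂ B Q * γ P B)
            (fun B hB => by show _ * x₂ B Q * γ P B = 0; rw [hγs P B (by simpa using hB), mul_zero])]
      have hA : ∀ A, x₁ P A * v A Q = x₁ P A * β A Q + x₁ P A * γ A Q := by
        intro A
        by_cases h : A ≤ Q
        · rw [hγs A Q (not_lt.mpr h)]; simp [hv, h]
        · rw [hβs A Q h]; simp [hv, h]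
      have hB : ∀ B, (-1:K)^(μ P - μ B) * x₂ B Q * v P B
          = (-1:K)^(μ P - μ B) * x₂ B Q * β P B
            - (-1:K)^(μ P - μ B + 1) * x₂ B Q * γ P B := by
        intro B
        have hse : (-1:K)^(μ P - μ B + 1) = -((-1:K)^(μ P - μ B)) := by
          rw [eps_add, zpow_one]; ring
        by_cases h : P ≤ B
        · rw [hγs P B (not_lt.mpr h)]; simp [hv, h]
        · rw [hβs P B h, hse]; simp only [hv]; rw [if_neg h]; ring
      rw [Finset.sum_congr rfl (fun A _ => hA A), Finset.sum_congr rfl (fun B _ => hB B),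
        Finset.sum_add_distrib, Finset.sum_sub_distrib]
      ring
    · rw [if_neg hPQ]
      have hQP : Q < P := not_le.mp hPQ
      simp only [Pi.neg_apply, m1V, if_pos hQP]
      rw [sum_univ_of (Finset.Ioi P) (fun A => x₁ P A * γ A Q)
            (fun A hA => by show x₁ P A * _ = 0; rw [hx₁.1 P A (by simpa using hA), zero_mul]),
          sum_univ_of (Finset.Iio Q) (fun B => (-1:K)^(μ P - μ B + 1) * x₂ B Q * γ P B)
            (fun B hB => by show _ * x₂ B Q * _ = 0; rw [hx₂.1 B Q (by simpa using hB), mul_zero, zero_mul])]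
      have hA : ∀ A, x₁ P A * γ A Q = x₁ P A * v A Q := by
        intro A
        by_cases h : A ≤ Q
        · rw [hx₁.1 P A (not_lt.mpr (h.trans hQP.le)), zero_mul, zero_mul]
        · simp [hv, h]
      have hB : ∀ B, (-1:K)^(μ P - μ B + 1) * x₂ B Q * γ P B
          = -((-1:K)^(μ P - μ B) * x₂ B Q * v P B) := by
        intro B
        have hse : (-1:K)^(μ P - μ B + 1) = -((-1:K)^(μ P - μ B)) := by
          rw [eps_add, zpow_one]; ring
        by_cases h : P ≤ B
        · rw [hx₂.1 B Q (not_lt.mpr (h.trans' hQP.le))]; ring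
        · rw [hse]; simp only [hv]; rw [if_neg h]; ring
      rw [Finset.sum_congr rfl (fun A _ => hA A), Finset.sum_congr rfl (fun B _ => hB B)]
      rw [Finset.sum_neg_distrib]
      ring
  show (-1:K)^(μ P * (μ Q + 1) + 1) *
      (if P ≤ Q then (m1R μ x₁ x₂ β - rR1 μ x₁ x₂ γ) P Q
        else (-(m1V μ x₁ x₂ γ)) P Q) = _
  rw [step1, Matrix.sub_apply, Matrix.smul_apply, Matrix.mul_apply, Matrix.mul_apply,
    smul_eq_mul]
  have hT1 : ∑ c, vDiff μ x₂ Q c * alphaM μ β γ c P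
      = ∑ c, ((-1:K)^(μ c) * x₂ c Q) * ((-1:K)^(μ P * (μ c + 1) + 1) * v P c) :=
    Finset.sum_congr rfl (fun c _ => by rw [vDiff_apply hx₂]; rfl)
  have hT2 : ∑ c, alphaM μ β γ Q c * vDiff μ x₁ c P
      = ∑ c, ((-1:K)^(μ c * (μ Q + 1) + 1) * v c Q) * ((-1:K)^(μ P) * x₁ P c) :=
    Finset.sum_congr rfl (fun c _ => by rw [vDiff_apply hx₁]; rfl)
  rw [hT1, hT2]
  have hXB : ∀ B, (-1:K)^(μ P * (μ Q + 1) + 1) * ((-1:K)^(μ P - μ B) * x₂ B Q * v P B)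
      = ((-1:K)^(μ B) * x₂ B Q) * ((-1:K)^(μ P * (μ B + 1) + 1) * v P B) := by
    intro B
    by_cases h : x₂ B Q = 0
    · rw [h]; ring
    · have hd := hx₂.2.1 B Q h
      rw [hd]
      have hs : (-1:K)^(μ P * (μ Q + 1) + 1) * (-1:K)^(μ P - (μ Q + 1))
          = (-1:K)^(μ Q + 1) * (-1:K)^((μ Q + 1 + 1) * μ P + 1) := by
        rw [← eps_add, ← eps_add]
        exact eps_congr ⟨-(μ Q + 1), by ring⟩
      have hs' : (-1:K)^(μ P * (μ Q + 1 + 1) + 1) = (-1:K)^((μ Q + 1 + 1) * μ P + 1) :=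
        eps_congr ⟨0, by ring⟩
      rw [hs']
      linear_combination (x₂ B Q * v P B) * hs
  have hXA : ∀ A, (-1:K)^(μ P * (μ Q + 1) + 1) * (x₁ P A * v A Q)
      = (-1:K)^k * (((-1:K)^(μ A * (μ Q + 1) + 1) * v A Q) * ((-1:K)^(μ P) * x₁ P A)) := by
    intro A
    by_cases h1 : x₁ P A = 0
    · rw [h1]; ring
    · by_cases h2 : v A Q = 0
      · rw [h2]; ring
      · have hk' := hvd A Q h2
        have hPA := hx₁.2.1 P A h1
        rw [hPA, ← hk']
        have hs : (-1:K)^((μ A + 1) * (μ Q + 1) + 1)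
            = (-1:K)^((μ A - μ Q) + ((μ A * (μ Q + 1) + 1) + (μ A + 1))) :=
          eps_congr ⟨μ Q - μ A, by ring⟩
        rw [hs, eps_add, eps_add]
        ring
  have hSB : (-1:K)^(μ P * (μ Q + 1) + 1) * ∑ B, (-1:K)^(μ P - μ B) * x₂ B Q * v P B
      = ∑ c, ((-1:K)^(μ c) * x₂ c Q) * ((-1:K)^(μ P * (μ c + 1) + 1) * v P c) := by
    rw [Finset.mul_sum]; exact Finset.sum_congr rfl (fun B _ => hXB B)
  have hSA : (-1:K)^(μ P * (μ Q + 1) + 1) * ∑ A, x₁ P A * v A Q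
      = (-1:K)^k * ∑ c, ((-1:K)^(μ c * (μ Q + 1) + 1) * v c Q) * ((-1:K)^(μ P) * x₁ P c) := by
    rw [Finset.mul_sum, Finset.mul_sum]; exact Finset.sum_congr rfl (fun A _ => hXA A)
  linear_combination hSB - hSA

lemma sum_sum_aug {x : Fin r → Fin r → K} (hx : IsVertexAug μ x) (p : Fin r)
    (w : Fin r → K) : ∑ a, ∑ b, x p a * (x a b * w b) = 0 := by
  rw [Finset.sum_comm]
  refine Finset.sum_eq_zero fun b _ => ?_
  have h0 := aug_sum_univ hx p b
  calc ∑ a, x p a * (x a b * w b) = (∑ a, x p a * x a b) * w b := by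
        rw [Finset.sum_mul]; exact Finset.sum_congr rfl fun a _ => by ring
    _ = 0 := by rw [h0, zero_mul]

lemma sum_sum_aug₂ {x : Fin r → Fin r → K} (hx : IsVertexAug μ x) (q : Fin r)
    (w : Fin r → K) (e e' : Fin r → ℤ) (σ : K)
    (he : ∀ b b', x b' b ≠ 0 → (-1:K)^(e b) * (-1:K)^(e' b') = σ) :
    ∑ b, ∑ b', (-1:K)^(e b) * x b q * ((-1:K)^(e' b') * x b' b * w b') = 0 := by
  have key : ∀ b b', (-1:K)^(e b) * x b q * ((-1:K)^(e' b') * x b' b * w b')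
      = σ * (x b' b * (x b q * w b')) := by
    intro b b'
    by_cases h : x b' b = 0
    · rw [h]; ring
    · linear_combination (x b q * (x b' b * w b')) * (he b b' h)
  calc ∑ b, ∑ b', (-1:K)^(e b) * x b q * ((-1:K)^(e' b') * x b' b * w b')
      = ∑ b, ∑ b', σ * (x b' b * (x b q * w b')) := by
        exact Finset.sum_congr rfl fun b _ => Finset.sum_congr rfl fun b' _ => key b b'
    _ = 0 := by
        rw [Finset.sum_comm]
        refine Finset.sum_eq_zero fun b' _ => ?_
        have h0 := aug_sum_univ hx b' q
        calc ∑ b, σ * (x b' b * (x b q * w b'))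
            = (σ * w b') * ∑ b, x b' b * x b q := by
              rw [Finset.mul_sum]; exact Finset.sum_congr rfl fun b _ => by ring
          _ = 0 := by rw [h0, mul_zero]

lemma cross_cancel {x₁ x₂ : Fin r → Fin r → K} (P Q : Fin r)
    (e e' : Fin r → Fin r → ℤ) (w : Fin r → Fin r → K)
    (he : ∀ A B, x₁ P A ≠ 0 → (-1:K)^(e A B) = -(-1:K)^(e' A B)) :
    ∑ A, ∑ B, x₁ P A * ((-1:K)^(e A B) * x₂ B Q * w A B)
      + ∑ B, ∑ A, (-1:K)^(e' A B) * x₂ B Q * (x₁ P A * w A B) = 0 := by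
  have hc : ∑ B, ∑ A, (-1:K)^(e' A B) * x₂ B Q * (x₁ P A * w A B)
      = ∑ A, ∑ B, (-1:K)^(e' A B) * x₂ B Q * (x₁ P A * w A B) := Finset.sum_comm
  rw [hc, ← Finset.sum_add_distrib]
  refine Finset.sum_eq_zero fun A _ => ?_
  rw [← Finset.sum_add_distrib]
  refine Finset.sum_eq_zero fun B _ => ?_
  by_cases h : x₁ P A = 0
  · rw [h]; ring
  · linear_combination (x₂ B Q * (x₁ P A * w A B)) * (he A B h)

lemma cross_eq {x₁ x₂ : Fin r → Fin r → K} (P Q : Fin r)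
    (e e' : Fin r → Fin r → ℤ) (w : Fin r → Fin r → K)
    (he : ∀ A B, x₁ P A ≠ 0 → (-1:K)^(e A B) = (-1:K)^(e' A B)) :
    ∑ A, ∑ B, x₁ P A * ((-1:K)^(e A B) * x₂ B Q * w A B)
      = ∑ B, ∑ A, (-1:K)^(e' A B) * x₂ B Q * (x₁ P A * w A B) := by
  have hc : ∑ B, ∑ A, (-1:K)^(e' A B) * x₂ B Q * (x₁ P A * w A B)
      = ∑ A, ∑ B, (-1:K)^(e' A B) * x₂ B Q * (x₁ P A * w A B) := Finset.sum_comm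
  rw [hc]
  refine Finset.sum_congr rfl fun A _ => Finset.sum_congr rfl fun B _ => ?_
  by_cases h : x₁ P A = 0
  · rw [h]; ring
  · linear_combination (x₂ B Q * (x₁ P A * w A B)) * (he A B h)

lemma m1R_m1R {x₁ x₂ : Fin r → Fin r → K} (hx₁ : IsVertexAug μ x₁)
    (hx₂ : IsVertexAug μ x₂) (β : Fin r → Fin r → K) :
    m1R μ x₁ x₂ (m1R μ x₁ x₂ β) = 0 := by
  funext P Q
  show -(∑ A ∈ Finset.Ioi P, x₁ P A * m1R μ x₁ x₂ β A Q) +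
      ∑ B ∈ Finset.Iio Q, (-1:K)^(μ P - μ B) * x₂ B Q * m1R μ x₁ x₂ β P B = (0:K)
  have e1 : ∑ A ∈ Finset.Ioi P, x₁ P A * m1R μ x₁ x₂ β A Q
      = -(∑ A, ∑ A', x₁ P A * (x₁ A A' * β A' Q))
        + ∑ A, ∑ B, x₁ P A * ((-1:K)^(μ A - μ B) * x₂ B Q * β A B) := by
    have step : ∑ A ∈ Finset.Ioi P, x₁ P A * m1R μ x₁ x₂ β A Q
        = ∑ A ∈ Finset.Ioi P, (-(∑ A', x₁ P A * (x₁ A A' * β A' Q))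
            + ∑ B, x₁ P A * ((-1:K)^(μ A - μ B) * x₂ B Q * β A B)) := by
      refine Finset.sum_congr rfl fun A _ => ?_
      have hm : m1R μ x₁ x₂ β A Q = -(∑ A', x₁ A A' * β A' Q)
          + ∑ B, (-1:K)^(μ A - μ B) * x₂ B Q * β A B := by
        simp only [m1R]
        rw [sum_univ_of (Finset.Ioi A) (fun A' => x₁ A A' * β A' Q)
              (fun A' hA' => by
                show x₁ A A' * _ = 0
                rw [hx₁.1 A A' (by simpa using hA'), zero_mul]),
            sum_univ_of (Finset.Iio Q) (fun B => (-1:K)^(μ A - μ B) * x₂ B Q * β A B)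
              (fun B hB => by
                show _ * x₂ B Q * _ = 0
                rw [hx₂.1 B Q (by simpa using hB), mul_zero, zero_mul])]
      rw [hm, mul_add, mul_neg, Finset.mul_sum, Finset.mul_sum]
    rw [step, sum_univ_of _ _ (fun A hA => by
      simp [hx₁.1 P A (by simpa using hA)]), Finset.sum_add_distrib,
      Finset.sum_neg_distrib]
  have e2 : ∑ B ∈ Finset.Iio Q, (-1:K)^(μ P - μ B) * x₂ B Q * m1R μ x₁ x₂ β P B
      = -(∑ B, ∑ A, (-1:K)^(μ P - μ B) * x₂ B Q * (x₁ P A * β A B))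
        + ∑ B, ∑ B', (-1:K)^(μ P - μ B) * x₂ B Q
            * ((-1:K)^(μ P - μ B') * x₂ B' B * β P B') := by
    have step : ∑ B ∈ Finset.Iio Q, (-1:K)^(μ P - μ B) * x₂ B Q * m1R μ x₁ x₂ β P B
        = ∑ B ∈ Finset.Iio Q,
            (-(∑ A, (-1:K)^(μ P - μ B) * x₂ B Q * (x₁ P A * β A B))
              + ∑ B', (-1:K)^(μ P - μ B) * x₂ B Q
                  * ((-1:K)^(μ P - μ B') * x₂ B' B * β P B')) := by
      refine Finset.sum_congr rfl fun B _ => ?_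
      have hm : m1R μ x₁ x₂ β P B = -(∑ A, x₁ P A * β A B)
          + ∑ B', (-1:K)^(μ P - μ B') * x₂ B' B * β P B' := by
        simp only [m1R]
        rw [sum_univ_of (Finset.Ioi P) (fun A => x₁ P A * β A B)
              (fun A hA => by
                show x₁ P A * _ = 0
                rw [hx₁.1 P A (by simpa using hA), zero_mul]),
            sum_univ_of (Finset.Iio B) (fun B' => (-1:K)^(μ P - μ B') * x₂ B' B * β P B')
              (fun B' hB' => by
                show _ * x₂ B' B * _ = 0
                rw [hx₂.1 B' B (by simpa using hB'), mul_zero, zero_mul])]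
      rw [hm, mul_add, mul_neg, Finset.mul_sum, Finset.mul_sum]
    rw [step, sum_univ_of _ _ (fun B hB => by
      simp [hx₂.1 B Q (by simpa using hB)]), Finset.sum_add_distrib,
      Finset.sum_neg_distrib]
  have hW1 : ∑ A, ∑ A', x₁ P A * (x₁ A A' * β A' Q) = 0 :=
    sum_sum_aug hx₁ P (fun A' => β A' Q)
  have hW4 : ∑ B, ∑ B', (-1:K)^(μ P - μ B) * x₂ B Q
      * ((-1:K)^(μ P - μ B') * x₂ B' B * β P B') = 0 := by
    refine sum_sum_aug₂ hx₂ Q (fun B' => β P B') (fun b => μ P - μ b)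
      (fun b' => μ P - μ b') (-1) (fun b b' h => ?_)
    show (-1:K)^(μ P - μ b) * (-1:K)^(μ P - μ b') = -1
    rw [← eps_add, hx₂.2.1 b' b h,
      eps_congr (a := μ P - μ b + (μ P - (μ b + 1))) (b := 1) ⟨μ P - μ b - 1, by ring⟩,
      zpow_one]
  have hW23 : ∑ A, ∑ B, x₁ P A * ((-1:K)^(μ A - μ B) * x₂ B Q * β A B)
      + ∑ B, ∑ A, (-1:K)^(μ P - μ B) * x₂ B Q * (x₁ P A * β A B) = 0 := by
    refine cross_cancel P Q (fun A B => μ A - μ B) (fun A B => μ P - μ B) β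
      (fun A B h => ?_)
    show (-1:K)^(μ A - μ B) = -(-1:K)^(μ P - μ B)
    rw [hx₁.2.1 P A h, show μ A + 1 - μ B = (μ A - μ B) + 1 from by ring,
      eps_add, zpow_one]
    ring
  linear_combination -e1 + e2 + hW1 + hW4 - hW23

lemma m1V_m1V {x₁ x₂ : Fin r → Fin r → K} (hx₁ : IsVertexAug μ x₁)
    (hx₂ : IsVertexAug μ x₂) (γ : Fin r → Fin r → K) :
    m1V μ x₁ x₂ (m1V μ x₁ x₂ γ) = 0 := by
  funext P Q
  show (if Q < P then (∑ A ∈ Finset.Ioi P, x₁ P A * m1V μ x₁ x₂ γ A Q) +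
      ∑ B ∈ Finset.Iio Q, (-1:K)^(μ P - μ B + 1) * x₂ B Q * m1V μ x₁ x₂ γ P B else 0)
    = (0:K)
  by_cases hQP : Q < P
  swap
  · rw [if_neg hQP]
  rw [if_pos hQP]
  have e1 : ∑ A ∈ Finset.Ioi P, x₁ P A * m1V μ x₁ x₂ γ A Q
      = (∑ A, ∑ A', x₁ P A * (x₁ A A' * γ A' Q))
        + ∑ A, ∑ B, x₁ P A * ((-1:K)^(μ A - μ B + 1) * x₂ B Q * γ A B) := by
    have step : ∑ A ∈ Finset.Ioi P, x₁ P A * m1V μ x₁ x₂ γ A Q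
        = ∑ A ∈ Finset.Ioi P, ((∑ A', x₁ P A * (x₁ A A' * γ A' Q))
            + ∑ B, x₁ P A * ((-1:K)^(μ A - μ B + 1) * x₂ B Q * γ A B)) := by
      refine Finset.sum_congr rfl fun A hA => ?_
      have hQA : Q < A := hQP.trans (Finset.mem_Ioi.mp hA)
      have hm : m1V μ x₁ x₂ γ A Q = (∑ A', x₁ A A' * γ A' Q)
          + ∑ B, (-1:K)^(μ A - μ B + 1) * x₂ B Q * γ A B := by
        simp only [m1V, if_pos hQA]
        rw [sum_univ_of (Finset.Ioi A) (fun A' => x₁ A A' * γ A' Q)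
              (fun A' hA' => by
                show x₁ A A' * _ = 0
                rw [hx₁.1 A A' (by simpa using hA'), zero_mul]),
            sum_univ_of (Finset.Iio Q) (fun B => (-1:K)^(μ A - μ B + 1) * x₂ B Q * γ A B)
              (fun B hB => by
                show _ * x₂ B Q * _ = 0
                rw [hx₂.1 B Q (by simpa using hB), mul_zero, zero_mul])]
      rw [hm, mul_add, Finset.mul_sum, Finset.mul_sum]
    rw [step, sum_univ_of _ _ (fun A hA => by
      simp [hx₁.1 P A (by simpa using hA)]), Finset.sum_add_distrib]
  have e2 : ∑ B ∈ Finset.Iio Q, (-1:K)^(μ P - μ B + 1) * x₂ B Q * m1V μ x₁ x₂ γ P B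
      = (∑ B, ∑ A, (-1:K)^(μ P - μ B + 1) * x₂ B Q * (x₁ P A * γ A B))
        + ∑ B, ∑ B', (-1:K)^(μ P - μ B + 1) * x₂ B Q
            * ((-1:K)^(μ P - μ B' + 1) * x₂ B' B * γ P B') := by
    have step : ∑ B ∈ Finset.Iio Q, (-1:K)^(μ P - μ B + 1) * x₂ B Q * m1V μ x₁ x₂ γ P B
        = ∑ B ∈ Finset.Iio Q,
            ((∑ A, (-1:K)^(μ P - μ B + 1) * x₂ B Q * (x₁ P A * γ A B))
              + ∑ B', (-1:K)^(μ P - μ B + 1) * x₂ B Q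
                  * ((-1:K)^(μ P - μ B' + 1) * x₂ B' B * γ P B')) := by
      refine Finset.sum_congr rfl fun B hB => ?_
      have hBP : B < P := (Finset.mem_Iio.mp hB).trans hQP
      have hm : m1V μ x₁ x₂ γ P B = (∑ A, x₁ P A * γ A B)
          + ∑ B', (-1:K)^(μ P - μ B' + 1) * x₂ B' B * γ P B' := by
        simp only [m1V, if_pos hBP]
        rw [sum_univ_of (Finset.Ioi P) (fun A => x₁ P A * γ A B)
              (fun A hA => by
                show x₁ P A * _ = 0
                rw [hx₁.1 P A (by simpa using hA), zero_mul]),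
            sum_univ_of (Finset.Iio B) (fun B' => (-1:K)^(μ P - μ B' + 1) * x₂ B' B * γ P B')
              (fun B' hB' => by
                show _ * x₂ B' B * _ = 0
                rw [hx₂.1 B' B (by simpa using hB'), mul_zero, zero_mul])]
      rw [hm, mul_add, Finset.mul_sum, Finset.mul_sum]
    rw [step, sum_univ_of _ _ (fun B hB => by
      simp [hx₂.1 B Q (by simpa using hB)]), Finset.sum_add_distrib]
  have hW1 : ∑ A, ∑ A', x₁ P A * (x₁ A A' * γ A' Q) = 0 :=
    sum_sum_aug hx₁ P (fun A' => γ A' Q)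
  have hW4 : ∑ B, ∑ B', (-1:K)^(μ P - μ B + 1) * x₂ B Q
      * ((-1:K)^(μ P - μ B' + 1) * x₂ B' B * γ P B') = 0 := by
    refine sum_sum_aug₂ hx₂ Q (fun B' => γ P B') (fun b => μ P - μ b + 1)
      (fun b' => μ P - μ b' + 1) (-1) (fun b b' h => ?_)
    show (-1:K)^(μ P - μ b + 1) * (-1:K)^(μ P - μ b' + 1) = -1
    rw [← eps_add, hx₂.2.1 b' b h,
      eps_congr (a := μ P - μ b + 1 + (μ P - (μ b + 1) + 1)) (b := 1)
        ⟨μ P - μ b, by ring⟩, zpow_one]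
  have hW23 : ∑ A, ∑ B, x₁ P A * ((-1:K)^(μ A - μ B + 1) * x₂ B Q * γ A B)
      + ∑ B, ∑ A, (-1:K)^(μ P - μ B + 1) * x₂ B Q * (x₁ P A * γ A B) = 0 := by
    refine cross_cancel P Q (fun A B => μ A - μ B + 1) (fun A B => μ P - μ B + 1) γ
      (fun A B h => ?_)
    show (-1:K)^(μ A - μ B + 1) = -(-1:K)^(μ P - μ B + 1)
    rw [hx₁.2.1 P A h]
    have h2 : (-1:K)^(μ A + 1 - μ B + 1) = -(-1:K)^(μ A - μ B + 1) := by
      rw [show μ A + 1 - μ B + 1 = (μ A - μ B + 1) + 1 from by ring, eps_add, zpow_one]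
      ring
    rw [h2]
    ring
  linear_combination e1 + e2 + hW1 + hW4 + hW23

lemma m1R_rR1 {x₁ x₂ : Fin r → Fin r → K} (hx₁ : IsVertexAug μ x₁)
    (hx₂ : IsVertexAug μ x₂) (γ : Fin r → Fin r → K)
    (hγs : ∀ p q : Fin r, ¬ q < p → γ p q = 0) :
    m1R μ x₁ x₂ (rR1 μ x₁ x₂ γ) = rR1 μ x₁ x₂ (m1V μ x₁ x₂ γ) := by
  funext P Q
  show -(∑ A ∈ Finset.Ioi P, x₁ P A * rR1 μ x₁ x₂ γ A Q) +
      ∑ B ∈ Finset.Iio Q, (-1:K)^(μ P - μ B) * x₂ B Q * rR1 μ x₁ x₂ γ P B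
    = rR1 μ x₁ x₂ (m1V μ x₁ x₂ γ) P Q
  by_cases hPQ : P ≤ Q
  swap
  · -- both sides vanish
    have hQP : Q < P := not_le.mp hPQ
    have h1 : ∀ A ∈ Finset.Ioi P, x₁ P A * rR1 μ x₁ x₂ γ A Q = 0 := by
      intro A hA
      have hAQ : ¬ A ≤ Q := fun h => hPQ ((Finset.mem_Ioi.mp hA).le.trans h)
      rw [show rR1 μ x₁ x₂ γ A Q = 0 from by simp only [rR1, if_neg hAQ], mul_zero]
    have h2 : ∀ B ∈ Finset.Iio Q, (-1:K)^(μ P - μ B) * x₂ B Q * rR1 μ x₁ x₂ γ P B = 0 := by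
      intro B hB
      have hPB : ¬ P ≤ B := not_le.mpr ((Finset.mem_Iio.mp hB).trans hQP)
      rw [show rR1 μ x₁ x₂ γ P B = 0 from by simp only [rR1, if_neg hPB], mul_zero]
    rw [Finset.sum_congr rfl h1, Finset.sum_congr rfl h2,
      show rR1 μ x₁ x₂ (m1V μ x₁ x₂ γ) P Q = 0 from by simp only [rR1, if_neg hPQ]]
    simp
  -- main case P ≤ Q
  set G : Fin r → K := fun A => (∑ A', x₁ A A' * γ A' Q)
      + ∑ B, (-1:K)^(μ A - μ B + 1) * x₂ B Q * γ A B with hG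
  set H : Fin r → K := fun B => (∑ A, x₁ P A * γ A B)
      + ∑ B', (-1:K)^(μ P - μ B' + 1) * x₂ B' B * γ P B' with hH
  have f1 : ∀ A, A ≤ Q → rR1 μ x₁ x₂ γ A Q = G A := by
    intro A hAQ
    simp only [rR1, if_pos hAQ, hG]
    rw [sum_univ_of (Finset.Ioi Q) (fun A' => x₁ A A' * γ A' Q)
          (fun A' hA' => by
            show x₁ A A' * γ A' Q = 0
            rw [hγs A' Q (by simpa using hA'), mul_zero]),
        sum_univ_of (Finset.Iio A) (fun B => (-1:K)^(μ A - μ B + 1) * x₂ B Q * γ A B)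
          (fun B hB => by
            show _ * _ * γ A B = 0
            rw [hγs A B (by simpa using hB), mul_zero])]
  have f2 : ∀ A, Q < A → m1V μ x₁ x₂ γ A Q = G A := by
    intro A hQA
    simp only [m1V, if_pos hQA, hG]
    rw [sum_univ_of (Finset.Ioi A) (fun A' => x₁ A A' * γ A' Q)
          (fun A' hA' => by
            show x₁ A A' * _ = 0
            rw [hx₁.1 A A' (by simpa using hA'), zero_mul]),
        sum_univ_of (Finset.Iio Q) (fun B => (-1:K)^(μ A - μ B + 1) * x₂ B Q * γ A B)
          (fun B hB => by
            show _ * x₂ B Q * _ = 0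
            rw [hx₂.1 B Q (by simpa using hB), mul_zero, zero_mul])]
  have f3 : ∀ B, P ≤ B → rR1 μ x₁ x₂ γ P B = H B := by
    intro B hPB
    simp only [rR1, if_pos hPB, hH]
    rw [sum_univ_of (Finset.Ioi B) (fun A => x₁ P A * γ A B)
          (fun A hA => by
            show x₁ P A * γ A B = 0
            rw [hγs A B (by simpa using hA), mul_zero]),
        sum_univ_of (Finset.Iio P) (fun B' => (-1:K)^(μ P - μ B' + 1) * x₂ B' B * γ P B')
          (fun B' hB' => by
            show _ * _ * γ P B' = 0
            rw [hγs P B' (by simpa using hB'), mul_zero])]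
  have f4 : ∀ B, B < P → m1V μ x₁ x₂ γ P B = H B := by
    intro B hBP
    simp only [m1V, if_pos hBP, hH]
    rw [sum_univ_of (Finset.Ioi P) (fun A => x₁ P A * γ A B)
          (fun A hA => by
            show x₁ P A * _ = 0
            rw [hx₁.1 P A (by simpa using hA), zero_mul]),
        sum_univ_of (Finset.Iio B) (fun B' => (-1:K)^(μ P - μ B' + 1) * x₂ B' B * γ P B')
          (fun B' hB' => by
            show _ * x₂ B' B * _ = 0
            rw [hx₂.1 B' B (by simpa using hB'), mul_zero, zero_mul])]
  -- rewrite the four sums as sums over univ with explicit ifs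
  have E1 : ∑ A ∈ Finset.Ioi P, x₁ P A * rR1 μ x₁ x₂ γ A Q
      = ∑ A, x₁ P A * (if A ≤ Q then G A else 0) := by
    rw [← sum_univ_of (Finset.Ioi P) (fun A => x₁ P A * (if A ≤ Q then G A else 0))
          (fun A hA => by
            show x₁ P A * _ = 0
            rw [hx₁.1 P A (by simpa using hA), zero_mul])]
    refine Finset.sum_congr rfl fun A _ => ?_
    by_cases hAQ : A ≤ Q
    · rw [f1 A hAQ, if_pos hAQ]
    · rw [if_neg hAQ, show rR1 μ x₁ x₂ γ A Q = 0 from by simp only [rR1, if_neg hAQ]]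
  have E2 : ∑ B ∈ Finset.Iio Q, (-1:K)^(μ P - μ B) * x₂ B Q * rR1 μ x₁ x₂ γ P B
      = ∑ B, (-1:K)^(μ P - μ B) * x₂ B Q * (if P ≤ B then H B else 0) := by
    rw [← sum_univ_of (Finset.Iio Q)
          (fun B => (-1:K)^(μ P - μ B) * x₂ B Q * (if P ≤ B then H B else 0))
          (fun B hB => by
            show _ * x₂ B Q * _ = 0
            rw [hx₂.1 B Q (by simpa using hB), mul_zero, zero_mul])]
    refine Finset.sum_congr rfl fun B _ => ?_
    by_cases hPB : P ≤ B
    · rw [f3 B hPB, if_pos hPB]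
    · rw [if_neg hPB, show rR1 μ x₁ x₂ γ P B = 0 from by simp only [rR1, if_neg hPB]]
  have E3 : rR1 μ x₁ x₂ (m1V μ x₁ x₂ γ) P Q
      = (∑ A, if A ≤ Q then 0 else x₁ P A * G A)
        + ∑ B, (if P ≤ B then 0 else (-1:K)^(μ P - μ B + 1) * x₂ B Q * H B) := by
    simp only [rR1, if_pos hPQ]
    congr 1
    · rw [← sum_univ_of (Finset.Ioi Q) (fun A => if A ≤ Q then 0 else x₁ P A * G A)
            (fun A hA => by
              show (if A ≤ Q then 0 else x₁ P A * G A) = 0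
              rw [if_pos (by simpa using hA)])]
      refine Finset.sum_congr rfl fun A hA => ?_
      have hQA : Q < A := Finset.mem_Ioi.mp hA
      rw [f2 A hQA, if_neg (not_le.mpr hQA)]
    · rw [← sum_univ_of (Finset.Iio P)
            (fun B => if P ≤ B then 0 else (-1:K)^(μ P - μ B + 1) * x₂ B Q * H B)
            (fun B hB => by
              show (if P ≤ B then 0 else _) = 0
              rw [if_pos (by simpa using hB)])]
      refine Finset.sum_congr rfl fun B hB => ?_
      have hBP : B < P := Finset.mem_Iio.mp hB
      rw [f4 B hBP, if_neg (not_le.mpr hBP)]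
  rw [E1, E2, E3]
  -- the key identity
  have KEY : ∑ A, x₁ P A * G A = ∑ B, (-1:K)^(μ P - μ B) * x₂ B Q * H B := by
    have gA : ∑ A, x₁ P A * G A
        = (∑ A, ∑ A', x₁ P A * (x₁ A A' * γ A' Q))
          + ∑ A, ∑ B, x₁ P A * ((-1:K)^(μ A - μ B + 1) * x₂ B Q * γ A B) := by
      rw [← Finset.sum_add_distrib]
      refine Finset.sum_congr rfl fun A _ => ?_
      rw [hG, mul_add, Finset.mul_sum, Finset.mul_sum]
    have gB : ∑ B, (-1:K)^(μ P - μ B) * x₂ B Q * H B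
        = (∑ B, ∑ A, (-1:K)^(μ P - μ B) * x₂ B Q * (x₁ P A * γ A B))
          + ∑ B, ∑ B', (-1:K)^(μ P - μ B) * x₂ B Q
              * ((-1:K)^(μ P - μ B' + 1) * x₂ B' B * γ P B') := by
      rw [← Finset.sum_add_distrib]
      refine Finset.sum_congr rfl fun B _ => ?_
      rw [hH, mul_add, Finset.mul_sum, Finset.mul_sum]
    have z1 : ∑ A, ∑ A', x₁ P A * (x₁ A A' * γ A' Q) = 0 :=
      sum_sum_aug hx₁ P (fun A' => γ A' Q)
    have z2 : ∑ B, ∑ B', (-1:K)^(μ P - μ B) * x₂ B Q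
        * ((-1:K)^(μ P - μ B' + 1) * x₂ B' B * γ P B') = 0 := by
      refine sum_sum_aug₂ hx₂ Q (fun B' => γ P B') (fun b => μ P - μ b)
        (fun b' => μ P - μ b' + 1) 1 (fun b b' h => ?_)
      show (-1:K)^(μ P - μ b) * (-1:K)^(μ P - μ b' + 1) = 1
      rw [← eps_add, hx₂.2.1 b' b h]
      exact (eps_congr (a := μ P - μ b + (μ P - (μ b + 1) + 1)) (b := 0)
        ⟨μ P - μ b, by ring⟩).trans (by norm_num)
    have ce : ∑ A, ∑ B, x₁ P A * ((-1:K)^(μ A - μ B + 1) * x₂ B Q * γ A B)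
        = ∑ B, ∑ A, (-1:K)^(μ P - μ B) * x₂ B Q * (x₁ P A * γ A B) := by
      refine cross_eq P Q (fun A B => μ A - μ B + 1) (fun A B => μ P - μ B) γ
        (fun A B h => ?_)
      show (-1:K)^(μ A - μ B + 1) = (-1:K)^(μ P - μ B)
      rw [hx₁.2.1 P A h]
      exact eps_congr ⟨0, by ring⟩
    linear_combination gA - gB + z1 - z2 + ce
  -- assemble
  have hA : ∀ A : Fin r, x₁ P A * (if A ≤ Q then G A else 0)
      + (if A ≤ Q then 0 else x₁ P A * G A) = x₁ P A * G A := by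
    intro A
    by_cases h : A ≤ Q <;> simp [h]
  have hB : ∀ B : Fin r, (-1:K)^(μ P - μ B) * x₂ B Q * (if P ≤ B then H B else 0)
      - (if P ≤ B then 0 else (-1:K)^(μ P - μ B + 1) * x₂ B Q * H B)
      = (-1:K)^(μ P - μ B) * x₂ B Q * H B := by
    intro B
    have hse : (-1:K)^(μ P - μ B + 1) = -(-1:K)^(μ P - μ B) := by
      rw [eps_add, zpow_one]; ring
    by_cases h : P ≤ B
    · rw [if_pos h, if_pos h]; ring
    · rw [if_neg h, if_neg h, hse]; ring
  have EA : ∑ A, (x₁ P A * (if A ≤ Q then G A else 0)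
      + (if A ≤ Q then 0 else x₁ P A * G A)) = ∑ A, x₁ P A * G A :=
    Finset.sum_congr rfl fun A _ => hA A
  have EB : ∑ B, ((-1:K)^(μ P - μ B) * x₂ B Q * (if P ≤ B then H B else 0)
      - (if P ≤ B then 0 else (-1:K)^(μ P - μ B + 1) * x₂ B Q * H B))
      = ∑ B, (-1:K)^(μ P - μ B) * x₂ B Q * H B :=
    Finset.sum_congr rfl fun B _ => hB B
  rw [Finset.sum_add_distrib] at EA
  rw [Finset.sum_sub_distrib] at EB
  linear_combination EB - EA - KEY

lemma m1R_sub (μ : Fin r → ℤ) (x₁ x₂ f g : Fin r → Fin r → K) :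
    m1R μ x₁ x₂ (f - g) = m1R μ x₁ x₂ f - m1R μ x₁ x₂ g := by
  funext P Q
  simp only [m1R, Pi.sub_apply, mul_sub]
  rw [Finset.sum_sub_distrib, Finset.sum_sub_distrib]
  ring

lemma rR1_neg (μ : Fin r → ℤ) (x₁ x₂ g : Fin r → Fin r → K) :
    rR1 μ x₁ x₂ (-g) = -(rR1 μ x₁ x₂ g) := by
  funext P Q
  simp only [rR1, Pi.neg_apply, mul_neg]
  by_cases h : P ≤ Q
  · rw [if_pos h, if_pos h, Finset.sum_neg_distrib, Finset.sum_neg_distrib]; ring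
  · rw [if_neg h, if_neg h, neg_zero]

lemma m1V_neg (μ : Fin r → ℤ) (x₁ x₂ g : Fin r → Fin r → K) :
    m1V μ x₁ x₂ (-g) = -(m1V μ x₁ x₂ g) := by
  funext P Q
  simp only [m1V, Pi.neg_apply, mul_neg]
  by_cases h : Q < P
  · rw [if_pos h, if_pos h, Finset.sum_neg_distrib, Finset.sum_neg_distrib]; ring
  · rw [if_neg h, if_neg h, neg_zero]

/-- **Claim 1 (explicit cone isomorphism at a vertex)**: `α : Cone(-r_{R,1}) → (E, D)` is an
isomorphism of cochain complexes: a degree-preserving `K`-linear bijection intertwining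
the cone differential `δ (β,γ) = (m_{1,R} β - r_{R,1} γ, -(m₁ γ))` with
`D f = d₂ ∘ f - (-1)^{|f|} f ∘ d₁`; moreover both `δ` and `D` square to zero. -/
theorem cone_iso_at_vertex (hr : 1 ≤ r) (μ : Fin r → ℤ)
    (x₁ x₂ : Fin r → Fin r → K) (hx₁ : IsVertexAug μ x₁) (hx₂ : IsVertexAug μ x₂) :
    -- `α` is a bijection from the cone onto `End(C)`
    Function.Bijective
      (fun bc : {bc : (Fin r → Fin r → K) × (Fin r → Fin r → K) //
          (∀ p q : Fin r, ¬ p ≤ q → bc.1 p q = 0) ∧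
          (∀ p q : Fin r, ¬ q < p → bc.2 p q = 0)} =>
        alphaM μ bc.1.1 bc.1.2) ∧
    -- `α` is `K`-linear
    (∀ β β' γ γ' : Fin r → Fin r → K,
      alphaM μ (β + β') (γ + γ') = alphaM μ β γ + alphaM μ β' γ') ∧
    (∀ (c : K) (β γ : Fin r → Fin r → K), alphaM μ (c • β) (c • γ) = c • alphaM μ β γ) ∧
    -- `α` is degree preserving
    (∀ (k : ℤ) (β γ : Fin r → Fin r → K),
      (∀ p q : Fin r, β p q ≠ 0 → μ p - μ q = k) →
      (∀ p q : Fin r, γ p q ≠ 0 → μ p - μ q = k) →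
      ∀ q p : Fin r, alphaM μ β γ q p ≠ 0 → μ p - μ q = k) ∧
    -- `α ∘ δ = D ∘ α` on homogeneous cone elements of degree `k`
    (∀ (k : ℤ) (β γ : Fin r → Fin r → K),
      (∀ p q : Fin r, ¬ p ≤ q → β p q = 0) → (∀ p q : Fin r, ¬ q < p → γ p q = 0) →
      (∀ p q : Fin r, β p q ≠ 0 → μ p - μ q = k) →
      (∀ p q : Fin r, γ p q ≠ 0 → μ p - μ q = k) →
      alphaM μ (m1R μ x₁ x₂ β - rR1 μ x₁ x₂ γ) (-(m1V μ x₁ x₂ γ)) =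
        vDiff μ x₂ * alphaM μ β γ - ((-1 : K) ^ k) • (alphaM μ β γ * vDiff μ x₁)) ∧
    -- `δ ∘ δ = 0`
    (∀ β γ : Fin r → Fin r → K,
      (∀ p q : Fin r, ¬ p ≤ q → β p q = 0) → (∀ p q : Fin r, ¬ q < p → γ p q = 0) →
      m1R μ x₁ x₂ (m1R μ x₁ x₂ β - rR1 μ x₁ x₂ γ) - rR1 μ x₁ x₂ (-(m1V μ x₁ x₂ γ)) = 0 ∧
        -(m1V μ x₁ x₂ (-(m1V μ x₁ x₂ γ))) = 0) ∧
    -- `D ∘ D = 0` on homogeneous endomorphisms of degree `k`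
    (∀ (k : ℤ) (f : Matrix (Fin r) (Fin r) K),
      (∀ q p : Fin r, f q p ≠ 0 → μ p - μ q = k) →
      vDiff μ x₂ * (vDiff μ x₂ * f - ((-1 : K) ^ k) • (f * vDiff μ x₁)) -
        ((-1 : K) ^ (k + 1)) •
          ((vDiff μ x₂ * f - ((-1 : K) ^ k) • (f * vDiff μ x₁)) * vDiff μ x₁) = 0) := by
  refine ⟨alpha_bij μ, alpha_add μ, alpha_smul μ, alpha_deg μ, ?_, ?_, ?_⟩
  · intro k β γ hβs hγs hβd hγd
    exact chain hx₁ hx₂ k β γ hβs hγs hβd hγd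
  · intro β γ hβs hγs
    constructor
    · rw [m1R_sub, m1R_m1R hx₁ hx₂ β, rR1_neg, m1R_rR1 hx₁ hx₂ γ hγs]
      abel
    · rw [m1V_neg, m1V_m1V hx₁ hx₂ γ]
      simp
  · intro k f _
    exact Dsq hx₁ hx₂ k f

end AugSheaf
end
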